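/- arXiv:1202.2545 — 2 statements merged into one kernel-verified Lean document; each statement's English description precedes it below -/
import Mathlib

section
/- Let n ≥ 1 be an integer and let ρ : ℤ → ℝ satisfy ρ(−l) = ρ(l) for all l ∈ ℤ and Σ_{l∈ℤ} |ρ(l)|ⁿ < ∞. Then for all reals s,t > 0, lim_{k→∞} (1/k) Σ_{l=0}^{⌊ks⌋} Σ_{m=0}^{⌊kt⌋} ρ(l−m)ⁿ = (Σ_{l∈ℤ} ρ(l)ⁿ) · min(s,t), where the limit is over integers k → ∞. -/
open MeasureTheory

noncomputable section

/-- Lebesgue measure restricted to `ℝ₊ = [0,∞)`. -/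
def mR : Measure ℝ := volume.restrict (Set.Ici (0 : ℝ))

/-- Lebesgue measure on `ℝ₊ⁿ`. -/
def μn (n : ℕ) : Measure (Fin n → ℝ) := Measure.pi fun _ => mR

/-- Number of inversions of a map `σ : Fin p → Fin m`:
`inv(σ) = Card {i < j : σ i > σ j}`. -/
def invCount {p m : ℕ} (σ : Fin p → Fin m) : ℕ :=
  (Finset.univ.filter fun ij : Fin p × Fin p => ij.1 < ij.2 ∧ σ ij.2 < σ ij.1).card

/-- The `q`-inner product
`⟨f,g⟩_q = Σ_{σ ∈ S_n} q^{inv σ} ∫ f(t_{σ(1)},…,t_{σ(n)}) g(t₁,…,t_n) dt`. -/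
def qInner (n : ℕ) (q : ℝ) (f g : (Fin n → ℝ) → ℝ) : ℝ :=
  ∑ σ : Equiv.Perm (Fin n),
    q ^ invCount (fun i => σ i) * ∫ t, f (fun i => t (σ i)) * g t ∂ μn n

/-- `f*`, the mirror of `f` : `f*(t₁,…,tₙ) = f(tₙ,…,t₁)`. -/
def mirror {n : ℕ} (f : (Fin n → ℝ) → ℝ) : (Fin n → ℝ) → ℝ := fun t => f fun i => t i.rev

/-- The pairing integral `∫_{P₂(σ)} F ⊗ H` associated with the pairing
`P₂(σ) = {{N+1-i, N+σ(i)} : 1 ≤ i ≤ N}` of `{1,…,2N}`, namely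
`∫ F(s₁,…,s_N) H(s_{N+1-σ⁻¹(1)},…,s_{N+1-σ⁻¹(N)}) ds`. -/
def P2Integral (N : ℕ) (σ : Equiv.Perm (Fin N)) (F H : (Fin N → ℝ) → ℝ) : ℝ :=
  ∫ s, F s * H (fun i => s (σ.symm i).rev) ∂ μn N

/-- `f` is symmetric: for every permutation `σ`, `f(t_{σ(1)},…,t_{σ(n)}) = f(t₁,…,tₙ)`
for almost every `t`. -/
def SymmFn {n : ℕ} (f : (Fin n → ℝ) → ℝ) : Prop :=
  ∀ σ : Equiv.Perm (Fin n), ∀ᵐ t ∂ μn n, f (fun i => t (σ i)) = f t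

/-- Safe coordinate access: `gv t k = t k` when `k < m`, and `0` otherwise. -/
def gv {m : ℕ} (t : Fin m → ℝ) (k : ℕ) : ℝ := if h : k < m then t ⟨k, h⟩ else 0

/-- The `p`-th contraction `f ⌢_p g`:
`(f ⌢_p g)(t₁,…,t_{n+m-2p}) = ∫ f(t₁,…,t_{n-p},s_p,…,s₁) g(s₁,…,s_p,t_{n-p+1},…,t_{n+m-2p}) ds`. -/
def contr (n m p : ℕ) (f : (Fin n → ℝ) → ℝ) (g : (Fin m → ℝ) → ℝ) :
    (Fin (n + m - 2 * p) → ℝ) → ℝ :=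
  fun t => ∫ s : Fin p → ℝ,
      f (fun i => if (i : ℕ) < n - p then gv t i else gv s (n - 1 - (i : ℕ))) *
      g (fun j => if (j : ℕ) < p then gv s j else gv t (n - p + ((j : ℕ) - p))) ∂ μn p

/-- `α(σ)` for a (strictly decreasing, 0-indexed) `σ : Fin p → Fin n`;
in 1-indexed terms `α(σ) = Σᵢ (n+1-σ(i)) - p(p+1)/2`. -/
def alphaA (n p : ℕ) (σ : Fin p → Fin n) : ℕ := (∑ i, (n - (σ i : ℕ))) - p * (p + 1) / 2

/-- `β(σ)` for an (injective, 0-indexed) `σ : Fin p → Fin n`;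
in 1-indexed terms `β(σ) = Σᵢ σ(i) - p(p+1)/2 + inv(σ)`. -/
def betaB (n p : ℕ) (σ : Fin p → Fin n) : ℕ :=
  ((∑ i, (σ i : ℕ)) - p * (p - 1) / 2) + invCount σ

/-- `f_q^{(p)}`, as a function of `(t₁,…,t_{n-p},s_p,…,s₁)`:
`Σ_{σ : {1,…,p} → {1,…,n} strictly decreasing} q^{α(σ)} f(x₁,…,xₙ)` where `x_{σ(i)} = s_i`
and the remaining coordinates, read increasingly, are `t₁,…,t_{n-p}`. -/
def qexpDec (n p : ℕ) (q : ℝ) (f : (Fin n → ℝ) → ℝ) : (Fin n → ℝ) → ℝ :=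
  fun u => ∑ σ ∈ Finset.univ.filter (fun σ : Fin p → Fin n => ∀ i j : Fin p, i < j → σ j < σ i),
    q ^ alphaA n p σ * f (fun j =>
      if ∃ i, σ i = j then
        ∑ i ∈ Finset.univ.filter (fun i => σ i = j), gv u (n - 1 - (i : ℕ))
      else gv u ((Finset.univ.filter fun j' : Fin n => j' < j ∧ ∀ i, σ i ≠ j').card))

/-- `f_q^{[p]}`, as a function of `(s₁,…,s_p,t₁,…,t_{n-p})`:
`Σ_{σ : {1,…,p} → {1,…,n} injective} q^{β(σ)} f(x₁,…,xₙ)` where `x_{σ(i)} = s_i`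
and the remaining coordinates, read increasingly, are `t₁,…,t_{n-p}`. -/
def qexpInj (n p : ℕ) (q : ℝ) (f : (Fin n → ℝ) → ℝ) : (Fin n → ℝ) → ℝ :=
  fun u => ∑ σ ∈ Finset.univ.filter (fun σ : Fin p → Fin n => Function.Injective σ),
    q ^ betaB n p σ * f (fun j =>
      if ∃ i, σ i = j then
        ∑ i ∈ Finset.univ.filter (fun i => σ i = j), gv u (i : ℕ)
      else gv u (p + (Finset.univ.filter fun j' : Fin n => j' < j ∧ ∀ i, σ i ≠ j').card))

/-- The `q`-contraction `f ⊗_q^p g := f_q^{(p)} ⌢_p g_q^{[p]}`. -/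
def qcontr (n m p : ℕ) (q : ℝ) (f : (Fin n → ℝ) → ℝ) (g : (Fin m → ℝ) → ℝ) :
    (Fin (n + m - 2 * p) → ℝ) → ℝ :=
  contr n m p (qexpDec n p q f) (qexpInj m p q g)

/-- Two (2-element) sets form a crossing: `{x₁,y₁}, {x₂,y₂}` with `x₁ < x₂ < y₁ < y₂`. -/
def Crossing (p₁ p₂ : Finset ℕ) : Prop :=
  ∃ x₁ ∈ p₁, ∃ y₁ ∈ p₁, ∃ x₂ ∈ p₂, ∃ y₂ ∈ p₂, x₁ < x₂ ∧ x₂ < y₁ ∧ y₁ < y₂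

/-- The number of crossings `Cr(π)` of a pairing `π` (each crossing counted once:
the pair containing the smallest point is listed first). -/
def crNum (π : Finset (Finset ℕ)) : ℕ := by
  classical exact ((π ×ˢ π).filter fun pp => Crossing pp.1 pp.2).card

/-- `π` is a pairing of `{0,…,N-1}`: a partition of it into 2-element sets. -/
def IsPairingOn (N : ℕ) (π : Finset (Finset ℕ)) : Prop :=
  (∀ pr ∈ π, pr.card = 2 ∧ pr ⊆ Finset.range N) ∧ ∀ x < N, ∃! pr, pr ∈ π ∧ x ∈ pr

/-- `off n i = n₁ + … + nᵢ`, the offset of the `(i+1)`-th block. -/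
def off (n : ℕ → ℕ) (i : ℕ) : ℕ := ∑ j ∈ Finset.range i, n j

/-- `π ∈ C₂(n₁ ⊗ … ⊗ n_r)`: `π` is a pairing of the ground set partitioned into the `r`
consecutive blocks of sizes `n 0, …, n (r-1)`, and every pair of `π` meets two distinct
blocks (no pair is contained in a single block). -/
def Respects (r : ℕ) (n : ℕ → ℕ) (π : Finset (Finset ℕ)) : Prop :=
  IsPairingOn (off n r) π ∧
    ∀ pr ∈ π, ¬ ∃ i < r, ∀ x ∈ pr, off n i ≤ x ∧ x < off n (i + 1)

/-- The (finite) set `C₂(n₁ ⊗ … ⊗ n_r)` of all respecting pairings. -/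
def respPairings (r : ℕ) (n : ℕ → ℕ) : Finset (Finset (Finset ℕ)) := by
  classical exact ((Finset.range (off n r)).powerset.powerset).filter fun π => Respects r n π

/-- The pairing integral `∫_π F`: one integration variable per pair of `π`, the two
coordinates of each pair being set equal to that variable, integrated over `ℝ₊^{N/2}`. -/
def pairingIntegral (π : Finset (Finset ℕ)) (F : (ℕ → ℝ) → ℝ) : ℝ :=
  ∫ u : {pr // pr ∈ π} → ℝ,
    F (fun x => ∑ pr ∈ Finset.univ.filter (fun pr : {pr // pr ∈ π} => x ∈ pr.1), u pr)
    ∂ Measure.pi fun _ => mR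

/-- The product `f₁(t₁,…,t_{n₁}) f₂(t_{n₁+1},…,t_{n₁+n₂}) ⋯ f_r(…,t_n)` as a function of
`t : ℕ → ℝ` (blocks of sizes `n 0, …, n (r-1)`). -/
def prodBlocks (r : ℕ) (n : ℕ → ℕ) (f : ∀ i, (Fin (n i) → ℝ) → ℝ) : (ℕ → ℝ) → ℝ :=
  fun t => ∏ i ∈ Finset.range r, f i (fun j => t (off n i + (j : ℕ)))

/-- `P₂(σ) = {{n+1-i, n+σ(i)} : 1 ≤ i ≤ n}` as a pairing of `{0,…,2n-1}` (0-indexed). -/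
def P2set (n : ℕ) (σ : Equiv.Perm (Fin n)) : Finset (Finset ℕ) :=
  Finset.univ.image fun i : Fin n => ({n - 1 - (i : ℕ), n + ((σ i : Fin n) : ℕ)} : Finset ℕ)

/-- The map `φ` in the construction of `F(σ₁,σ₂,π')`: the unpaired points of the first two
blocks are mapped increasingly onto `{0,…,n₀+n₁-2p-1}` and every later point `x` is mapped
to `x - 2p`. -/
def phiF (n₀ n₁ p : ℕ) (σ₁ : Fin p → Fin n₀) (σ₂ : Fin p → Fin n₁) (x : ℕ) : ℕ :=
  if x < n₀ + n₁ then
    ((Finset.range x).filter fun y =>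
      (∀ i, ((σ₁ i : ℕ)) ≠ y) ∧ (∀ i, n₀ + (σ₂ i : ℕ) ≠ y)).card
  else x - 2 * p

/-- The pairing `F(σ₁,σ₂,π')` of the ground set `{0,…,N-1}`: it contains the `p` pairs
`{σ₁(i), n₀+σ₂(i)}`, and its remaining pairs are exactly the `φ`-preimages of the pairs
of `π'`. -/
def Fpair (N n₀ n₁ p : ℕ) (σ₁ : Fin p → Fin n₀) (σ₂ : Fin p → Fin n₁)
    (π' : Finset (Finset ℕ)) : Finset (Finset ℕ) :=
  (Finset.univ.image fun i : Fin p => ({(σ₁ i : ℕ), n₀ + (σ₂ i : ℕ)} : Finset ℕ)) ∪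
  π'.image fun pr => (Finset.range N).filter fun x =>
    (x < n₀ + n₁ → (∀ i, (σ₁ i : ℕ) ≠ x) ∧ (∀ i, n₀ + (σ₂ i : ℕ) ≠ x)) ∧
    phiF n₀ n₁ p σ₁ σ₂ x ∈ pr

/-- Block sizes `(n₁+n₂-2p, n₃, …, n_r)` after contracting the first two blocks. -/
def contractedSizes (n : ℕ → ℕ) (p : ℕ) : ℕ → ℕ
  | 0 => n 0 + n 1 - 2 * p
  | k + 1 => n (k + 2)

/-- Kernels `(f₁ ⊗_q^p f₂, f₃, …, f_r)` after contracting the first two kernels. -/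
def contractedKernels (n : ℕ → ℕ) (p : ℕ) (q : ℝ) (f : ∀ i, (Fin (n i) → ℝ) → ℝ) :
    ∀ j, (Fin (contractedSizes n p j) → ℝ) → ℝ
  | 0 => qcontr (n 0) (n 1) p q (f 0) (f 1)
  | k + 1 => f (k + 2)

end
open Filter Topology

/-- fiber of (l,m) ↦ l - m over the product of ranges -/
def fib' (L M : ℕ) (d : ℤ) : Finset (ℕ × ℕ) :=
  (Finset.range (L+1) ×ˢ Finset.range (M+1)).filter fun p => (p.1 : ℤ) - (p.2 : ℤ) = d

lemma fib'_card_le (L M : ℕ) (d : ℤ) : (fib' L M d).card ≤ min L M + 1 := by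
  have h1 : (fib' L M d).card ≤ L + 1 := by
    have := Finset.card_le_card_of_injOn (fun p : ℕ × ℕ => p.1)
      (s := fib' L M d) (t := Finset.range (L+1)) ?_ ?_
    · simpa using this
    · intro p hp
      simp only [Finset.mem_coe, fib', Finset.mem_filter, Finset.mem_product, Finset.mem_range] at hp
      simp [Finset.mem_range]; omega
    · intro p hp q hq h
      simp only [Finset.mem_coe, fib', Finset.mem_filter, Finset.mem_product, Finset.mem_range] at hp hq
      have h' : p.1 = q.1 := h
      have e1 := hp.2; have e2 := hq.2
      ext <;> omega
  have h2 : (fib' L M d).card ≤ M + 1 := by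
    have := Finset.card_le_card_of_injOn (fun p : ℕ × ℕ => p.2)
      (s := fib' L M d) (t := Finset.range (M+1)) ?_ ?_
    · simpa using this
    · intro p hp
      simp only [Finset.mem_coe, fib', Finset.mem_filter, Finset.mem_product, Finset.mem_range] at hp
      simp [Finset.mem_range]; omega
    · intro p hp q hq h
      simp only [Finset.mem_coe, fib', Finset.mem_filter, Finset.mem_product, Finset.mem_range] at hp hq
      have h' : p.2 = q.2 := h
      have e1 := hp.2; have e2 := hq.2
      ext <;> omega
  omega

lemma le_fib'_card (L M : ℕ) (d : ℤ) : min L M + 1 - d.natAbs ≤ (fib' L M d).card := by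
  have := Finset.card_le_card_of_injOn (fun j : ℕ => (j + d.toNat, j + (-d).toNat))
    (s := Finset.range (min L M + 1 - d.natAbs)) (t := fib' L M d) ?_ ?_
  · simpa using this
  · intro j hj
    simp only [Finset.mem_coe, Finset.mem_range] at hj
    simp only [Finset.mem_coe, fib', Finset.mem_filter, Finset.mem_product, Finset.mem_range]
    refine ⟨⟨?_, ?_⟩, ?_⟩
    · omega
    · omega
    · push_cast; omega
  · intro a _ b _ h
    simp only [Prod.mk.injEq] at h
    omega

lemma fib'_empty {L M : ℕ} {d : ℤ} (h : d ∉ Finset.Icc (-(M:ℤ)) (L:ℤ)) : fib' L M d = ∅ := by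
  rw [Finset.eq_empty_iff_forall_notMem]
  intro p hp
  simp only [fib', Finset.mem_filter, Finset.mem_product, Finset.mem_range] at hp
  simp only [Finset.mem_Icc] at h
  omega

lemma floor_div_tendsto (s : ℝ) (hs : 0 < s) :
    Tendsto (fun k : ℕ => (⌊(k:ℝ)*s⌋₊ : ℝ) / k) atTop (𝓝 s) := by
  have h0 : Tendsto (fun k : ℕ => s - 1/(k:ℝ)) atTop (𝓝 s) := by
    simpa using (tendsto_const_nhds : Tendsto (fun _ : ℕ => s) atTop (𝓝 s)).sub (tendsto_one_div_atTop_nhds_zero_nat : Tendsto (fun k : ℕ => 1/(k:ℝ)) atTop (𝓝 0))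
  refine tendsto_of_tendsto_of_tendsto_of_le_of_le' h0 tendsto_const_nhds ?_ ?_
  · filter_upwards [eventually_ge_atTop 1] with k hk
    have hk' : (0:ℝ) < k := by exact_mod_cast Nat.pos_of_ne_zero (by omega)
    have h1 : (k:ℝ)*s - 1 < (⌊(k:ℝ)*s⌋₊ : ℝ) := Nat.sub_one_lt_floor _
    have hke : (1/(k:ℝ)) * k = 1 := by field_simp
    rw [le_div_iff₀ hk']
    nlinarith
  · filter_upwards [eventually_ge_atTop 1] with k hk
    have hk' : (0:ℝ) < k := by exact_mod_cast Nat.pos_of_ne_zero (by omega)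
    have h1 : (⌊(k:ℝ)*s⌋₊ : ℝ) ≤ (k:ℝ)*s := Nat.floor_le (by positivity)
    rw [div_le_iff₀ hk']
    nlinarith

/-- If `ρ` is even with `Σ_{l∈ℤ} |ρ(l)|ⁿ < ∞` then for `s,t > 0`,
`(1/k) Σ_{l=0}^{⌊ks⌋} Σ_{m=0}^{⌊kt⌋} ρ(l-m)ⁿ → (Σ_{l∈ℤ} ρ(l)ⁿ) · min(s,t)` as `k → ∞`. -/
theorem stmt17 (n : ℕ) (hn : 1 ≤ n) (ρ : ℤ → ℝ) (hsymm : ∀ l : ℤ, ρ (-l) = ρ l)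
    (hsum : Summable fun l : ℤ => |ρ l| ^ n) (s t : ℝ) (hs : 0 < s) (ht : 0 < t) :
    Filter.Tendsto (fun k : ℕ =>
        (1 / (k : ℝ)) *
          ∑ l ∈ Finset.range (⌊(k : ℝ) * s⌋₊ + 1), ∑ m ∈ Finset.range (⌊(k : ℝ) * t⌋₊ + 1),
            ρ ((l : ℤ) - (m : ℤ)) ^ n)
      Filter.atTop (nhds ((∑' l : ℤ, ρ l ^ n) * min s t)) := by
  classical
  set c : ℤ → ℝ := fun d => ρ d ^ n with hcdef
  set L : ℕ → ℕ := fun k => ⌊(k:ℝ) * s⌋₊ with hLdef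
  set M : ℕ → ℕ := fun k => ⌊(k:ℝ) * t⌋₊ with hMdef
  set F : ℕ → ℤ → ℝ := fun k d => c d * (((fib' (L k) (M k) d).card : ℝ) / k) with hFdef
  set q : ℝ := min s t with hqdef
  have hsc : Summable fun d : ℤ => |c d| := by
    simpa [hcdef, abs_pow] using hsum
  -- Step 1 : rewrite the expression as a tsum
  have hrw : ∀ k : ℕ,
      (1 / (k : ℝ)) * ∑ l ∈ Finset.range (L k + 1), ∑ m ∈ Finset.range (M k + 1),
        c ((l : ℤ) - (m : ℤ)) = ∑' d : ℤ, F k d := by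
    intro k
    have h1 : ∑ l ∈ Finset.range (L k + 1), ∑ m ∈ Finset.range (M k + 1), c ((l:ℤ) - (m:ℤ))
        = ∑ p ∈ Finset.range (L k + 1) ×ˢ Finset.range (M k + 1), c ((p.1:ℤ) - (p.2:ℤ)) := by
      rw [Finset.sum_product]
    have hmaps : ∀ p ∈ Finset.range (L k + 1) ×ˢ Finset.range (M k + 1),
        (p.1:ℤ) - (p.2:ℤ) ∈ Finset.Icc (-(M k : ℤ)) (L k : ℤ) := by
      intro p hp
      simp only [Finset.mem_product, Finset.mem_range] at hp
      simp only [Finset.mem_Icc]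
      omega
    have h2 := Finset.sum_fiberwise_of_maps_to hmaps (fun p : ℕ × ℕ => c ((p.1:ℤ) - (p.2:ℤ)))
    have h3 : ∀ d ∈ Finset.Icc (-(M k : ℤ)) (L k : ℤ),
        (∑ p ∈ (Finset.range (L k + 1) ×ˢ Finset.range (M k + 1)).filter
            (fun p => (p.1:ℤ) - (p.2:ℤ) = d), c ((p.1:ℤ) - (p.2:ℤ)))
          = ((fib' (L k) (M k) d).card : ℝ) * c d := by
      intro d _
      rw [show ((fib' (L k) (M k) d).card : ℝ) * c d
          = ∑ p ∈ fib' (L k) (M k) d, c d by rw [Finset.sum_const, nsmul_eq_mul]]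
      apply Finset.sum_congr rfl
      intro p hp
      simp only [fib', Finset.mem_filter] at hp
      rw [hp.2]
    have h4 : ∑' d : ℤ, F k d = ∑ d ∈ Finset.Icc (-(M k : ℤ)) (L k : ℤ), F k d := by
      apply tsum_eq_sum
      intro d hd
      simp only [hFdef, fib'_empty hd, Finset.card_empty, Nat.cast_zero, zero_div, mul_zero]
    rw [h4, h1, ← h2, Finset.mul_sum]
    apply Finset.sum_congr rfl
    intro d hd
    rw [h3 d hd]
    simp only [hFdef]
    ring
  -- Step 2 : convergence of floor ratios
  have hmin : Filter.Tendsto (fun k : ℕ => ((min (L k) (M k) : ℕ) : ℝ) / k)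
      Filter.atTop (nhds q) := by
    have := (floor_div_tendsto s hs).min (floor_div_tendsto t ht)
    refine this.congr' ?_
    filter_upwards [Filter.eventually_ge_atTop 1] with k hk
    have hk0 : (0:ℝ) ≤ (k:ℝ) := Nat.cast_nonneg k
    rw [Nat.cast_min, min_div_div_right hk0]
  have hinv : Filter.Tendsto (fun k : ℕ => 1/(k:ℝ)) Filter.atTop (nhds 0) :=
    tendsto_one_div_atTop_nhds_zero_nat
  -- Step 3 : pointwise limits
  have hptN : ∀ d : ℤ, Filter.Tendsto
      (fun k : ℕ => ((fib' (L k) (M k) d).card : ℝ) / k) Filter.atTop (nhds q) := by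
    intro d
    have hlow : Filter.Tendsto
        (fun k : ℕ => ((min (L k) (M k) : ℕ) : ℝ)/k - (d.natAbs : ℝ) * (1/(k:ℝ)))
        Filter.atTop (nhds q) := by
      simpa using hmin.sub (hinv.const_mul (d.natAbs : ℝ))
    have hhigh : Filter.Tendsto
        (fun k : ℕ => ((min (L k) (M k) : ℕ) : ℝ)/k + (1/(k:ℝ)))
        Filter.atTop (nhds q) := by
      simpa using hmin.add hinv
    refine tendsto_of_tendsto_of_tendsto_of_le_of_le' hlow hhigh ?_ ?_
    · filter_upwards [Filter.eventually_ge_atTop 1] with k hk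
      have hk' : (0:ℝ) < k := by exact_mod_cast Nat.pos_of_ne_zero (by omega)
      have hcard := le_fib'_card (L k) (M k) d
      have h5 : (min (L k) (M k) : ℕ) + 1 ≤ (fib' (L k) (M k) d).card + d.natAbs := by omega
      have h6 : ((min (L k) (M k) : ℕ) : ℝ) + 1
          ≤ ((fib' (L k) (M k) d).card : ℝ) + (d.natAbs : ℝ) := by exact_mod_cast h5
      rw [sub_le_iff_le_add, mul_one_div, ← add_div, div_le_div_iff₀ hk' hk']
      nlinarith
    · filter_upwards [Filter.eventually_ge_atTop 1] with k hk
      have hk' : (0:ℝ) < k := by exact_mod_cast Nat.pos_of_ne_zero (by omega)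
      have hcard := fib'_card_le (L k) (M k) d
      have h6 : ((fib' (L k) (M k) d).card : ℝ) ≤ ((min (L k) (M k) : ℕ) : ℝ) + 1 := by
        exact_mod_cast hcard
      rw [← add_div, div_le_div_iff₀ hk' hk']
      nlinarith
  have hpt : ∀ d : ℤ, Filter.Tendsto (fun k : ℕ => F k d) Filter.atTop (nhds (c d * q)) :=
    fun d => (hptN d).const_mul (c d)
  -- Step 4 : domination
  have hq1 : 0 < q := lt_min hs ht
  have hbound : ∀ᶠ k : ℕ in Filter.atTop, ∀ d : ℤ, ‖F k d‖ ≤ |c d| * (q + 1) := by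
    filter_upwards [Filter.eventually_ge_atTop 1] with k hk d
    have hk' : (0:ℝ) < k := by exact_mod_cast Nat.pos_of_ne_zero (by omega)
    have hk1 : (1:ℝ) ≤ k := by exact_mod_cast hk
    have hL1 : ((L k : ℕ) : ℝ) ≤ (k:ℝ) * s := Nat.floor_le (by positivity)
    have hM1 : ((M k : ℕ) : ℝ) ≤ (k:ℝ) * t := Nat.floor_le (by positivity)
    have hcard := fib'_card_le (L k) (M k) d
    have h6 : ((fib' (L k) (M k) d).card : ℝ) ≤ ((min (L k) (M k) : ℕ) : ℝ) + 1 := by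
      exact_mod_cast hcard
    have hmm : ((min (L k) (M k) : ℕ) : ℝ) ≤ (k:ℝ) * q := by
      have hml : (((min (L k) (M k)) :ℕ):ℝ) ≤ ((L k :ℕ):ℝ) := by
        exact_mod_cast Nat.min_le_left _ _
      have hmr : (((min (L k) (M k)) :ℕ):ℝ) ≤ ((M k :ℕ):ℝ) := by
        exact_mod_cast Nat.min_le_right _ _
      rw [Nat.cast_min] at hml hmr ⊢
      rcases min_cases s t with ⟨h, _⟩ | ⟨h, _⟩ <;> rw [hqdef, h]
      · linarith
      · linarith
    have hNk : ((fib' (L k) (M k) d).card : ℝ) / k ≤ q + 1 := by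
      rw [div_le_iff₀ hk']
      nlinarith
    have hN0 : (0:ℝ) ≤ ((fib' (L k) (M k) d).card : ℝ) / k := by positivity
    simp only [hFdef, Real.norm_eq_abs, abs_mul, abs_of_nonneg hN0]
    exact mul_le_mul_of_nonneg_left hNk (abs_nonneg _)
  -- Step 5 : combine
  have hsb : Summable fun d : ℤ => |c d| * (q + 1) := hsc.mul_right _
  have hmain := tendsto_tsum_of_dominated_convergence hsb hpt hbound
  have hfin : (∑' d : ℤ, c d * q) = (∑' d : ℤ, c d) * q := tsum_mul_right
  rw [hfin] at hmain
  exact hmain.congr fun k => (hrw k).symm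
end

section
/- Let n ≥ 1 be an integer and let ρ : ℤ → ℝ satisfy Σ_{l∈ℤ} |ρ(l)|ⁿ < ∞. Suppose there exists a family {e_l}_{l≥0} ⊂ L²(ℝ₊) with ∫₀^∞ e_l(x) e_m(x) dx = ρ(l−m) for all l,m ≥ 0. Then Σ_{l∈ℤ} ρ(l)ⁿ ≥ 0. -/
open MeasureTheory

open Filter Topology

noncomputable section Aux19

def Rp : Type := ℝ
instance : MeasurableSpace Rp := inferInstanceAs (MeasurableSpace ℝ)
instance : MeasureSpace Rp := ⟨mR⟩
instance : SigmaFinite (volume : Measure Rp) := by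
  show SigmaFinite mR
  unfold mR
  infer_instance

lemma aux_card (N : ℕ) (l : ℤ) :
    (((Finset.range N) ×ˢ (Finset.range N)).filter
      fun p : ℕ × ℕ => (p.1 : ℤ) - (p.2 : ℤ) = l).card = N - l.natAbs := by
  rw [show N - l.natAbs = (Finset.range (N - l.natAbs)).card by simp]
  apply Finset.card_nbij' (fun p => min p.1 p.2)
    (fun m => (m + l.toNat, m + (-l).toNat))
  · intro p hp
    simp only [Finset.mem_coe, Finset.mem_filter, Finset.mem_product, Finset.mem_range] at hp ⊢
    omega
  · intro m hm
    simp only [Finset.mem_coe, Finset.mem_filter, Finset.mem_product, Finset.mem_range] at hm ⊢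
    omega
  · intro p hp
    simp only [Finset.mem_coe, Finset.mem_filter, Finset.mem_product, Finset.mem_range] at hp
    have := hp.2
    ext <;> simp <;> omega
  · intro m hm
    simp only [Finset.mem_coe, Finset.mem_range] at hm
    simp only [min_def]
    split_ifs <;> omega

lemma aux_count (r : ℤ → ℝ) (N : ℕ) :
    ∑ j ∈ Finset.range N, ∑ k ∈ Finset.range N, r ((j : ℤ) - (k : ℤ))
      = ∑ l ∈ Finset.Icc (-(N : ℤ)) N, ((N - l.natAbs : ℕ) : ℝ) * r l := by
  rw [← Finset.sum_product']
  rw [← Finset.sum_fiberwise_of_maps_to' (t := Finset.Icc (-(N : ℤ)) N)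
      (g := fun p : ℕ × ℕ => (p.1 : ℤ) - (p.2 : ℤ))
      (fun p hp => by
        simp only [Finset.mem_product, Finset.mem_range] at hp
        simp only [Finset.mem_Icc]
        omega) r]
  refine Finset.sum_congr rfl fun l _ => ?_
  rw [Finset.sum_const, aux_card, nsmul_eq_mul]

end Aux19

/-- If `Σ_{l∈ℤ} |ρ(l)|ⁿ < ∞` and there is a family `{e_l} ⊂ L²(ℝ₊)` with
`∫ e_l e_m = ρ(l-m)`, then `Σ_{l∈ℤ} ρ(l)ⁿ ≥ 0`. -/
theorem stmt19 (n : ℕ) (hn : 1 ≤ n) (ρ : ℤ → ℝ)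
    (hsum : Summable fun l : ℤ => |ρ l| ^ n)
    (e : ℕ → ℝ → ℝ) (he : ∀ l, MemLp (e l) 2 mR)
    (hcov : ∀ l m : ℕ, ∫ x, e l x * e m x ∂ mR = ρ ((l : ℤ) - (m : ℤ))) :
    0 ≤ ∑' l : ℤ, ρ l ^ n := by
  set r : ℤ → ℝ := fun l => ρ l ^ n with hr
  -- integrability of products
  have hInt : ∀ j k : ℕ, Integrable (fun x : Rp => e j x * e k x) := by
    intro j k
    have h1 : MemLp ((e j) • (e k)) 1 mR :=
      (he k).smul (he j)
    have := memLp_one_iff_integrable.mp h1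
    exact this
  have hprod : ∀ j k : ℕ,
      Integrable (fun t : Fin n → Rp => ∏ i, (e j (t i) * e k (t i))) :=
    fun j k => Integrable.fintype_prod (f := fun _ : Fin n => fun x : Rp => e j x * e k x)
      (fun _ => hInt j k)
  have hval : ∀ j k : ℕ,
      (∫ t : Fin n → Rp, ∏ i, (e j (t i) * e k (t i))) = r ((j : ℤ) - (k : ℤ)) := by
    intro j k
    erw [MeasureTheory.integral_fintype_prod_eq_pow (ι := Fin n) (fun x : Rp => e j x * e k x)]
    rw [Fintype.card_fin]
    have : (∫ x : Rp, e j x * e k x) = ρ ((j : ℤ) - (k : ℤ)) := hcov j k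
    rw [this]
  -- positivity of the Toeplitz sums
  have key : ∀ N : ℕ,
      0 ≤ ∑ j ∈ Finset.range N, ∑ k ∈ Finset.range N, r ((j : ℤ) - (k : ℤ)) := by
    intro N
    have expand : ∀ t : Fin n → Rp,
        (∑ j ∈ Finset.range N, ∏ i, e j (t i)) ^ 2
          = ∑ j ∈ Finset.range N, ∑ k ∈ Finset.range N, ∏ i, (e j (t i) * e k (t i)) := by
      intro t
      rw [sq, Finset.sum_mul_sum]
      exact Finset.sum_congr rfl fun j _ => Finset.sum_congr rfl fun k _ =>
        (Finset.prod_mul_distrib).symm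
    have h0 : 0 ≤ ∫ t : Fin n → Rp, (∑ j ∈ Finset.range N, ∏ i, e j (t i)) ^ 2 :=
      integral_nonneg fun t => sq_nonneg _
    calc 0 ≤ ∫ t : Fin n → Rp, (∑ j ∈ Finset.range N, ∏ i, e j (t i)) ^ 2 := h0
      _ = ∫ t : Fin n → Rp,
            ∑ j ∈ Finset.range N, ∑ k ∈ Finset.range N, ∏ i, (e j (t i) * e k (t i)) := by
          exact integral_congr_ae (Eventually.of_forall fun t => expand t)
      _ = ∑ j ∈ Finset.range N, ∑ k ∈ Finset.range N, r ((j : ℤ) - (k : ℤ)) := by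
          erw [integral_finset_sum _
            (fun j _ => integrable_finset_sum _ (fun k _ => hprod j k))]
          refine Finset.sum_congr rfl fun j _ => ?_
          erw [integral_finset_sum _ (fun k _ => hprod j k)]
          exact Finset.sum_congr rfl fun k _ => hval j k
  -- summability
  have hrsum : Summable r := by
    refine Summable.of_norm_bounded hsum fun l => ?_
    rw [hr]
    simp [abs_pow]
  -- the Cesàro weights
  set F : ℕ → ℤ → ℝ := fun N l => (((N - l.natAbs : ℕ) : ℝ) / N) * r l with hF
  have hbd : ∀ N : ℕ, ∀ l : ℤ, ‖F N l‖ ≤ |ρ l| ^ n := by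
    intro N l
    rw [hF]
    simp only [norm_mul, norm_div, Real.norm_natCast]
    rcases Nat.eq_zero_or_pos N with h | h
    · simp [h, abs_pow]
    · calc (N - l.natAbs : ℕ) / (N : ℝ) * ‖r l‖ ≤ 1 * ‖r l‖ := by
            apply mul_le_mul_of_nonneg_right _ (norm_nonneg _)
            rw [div_le_one (by positivity)]
            exact_mod_cast Nat.sub_le N l.natAbs
        _ = ‖r l‖ := one_mul _
        _ ≤ |ρ l| ^ n := by rw [hr]; simp [abs_pow]
  have htsumF : ∀ N : ℕ, 0 ≤ ∑' l, F N l := by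
    intro N
    have hsupp : ∀ l ∉ Finset.Icc (-(N : ℤ)) N, F N l = 0 := by
      intro l hl
      simp only [Finset.mem_Icc] at hl
      have h0 : N - l.natAbs = 0 := by omega
      simp [hF, h0]
    rw [tsum_eq_sum hsupp]
    have heq : ∑ l ∈ Finset.Icc (-(N : ℤ)) N, F N l
        = (N : ℝ)⁻¹ * ∑ l ∈ Finset.Icc (-(N : ℤ)) N, ((N - l.natAbs : ℕ) : ℝ) * r l := by
      rw [Finset.mul_sum]
      refine Finset.sum_congr rfl fun l _ => ?_
      rw [hF]
      ring
    rw [heq, ← aux_count r N]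
    exact mul_nonneg (by positivity) (key N)
  have hlim : Tendsto (fun N => ∑' l, F N l) atTop (𝓝 (∑' l, r l)) := by
    apply tendsto_tsum_of_dominated_convergence hsum
    · intro l
      have h1 : Tendsto (fun N : ℕ => ((N - l.natAbs : ℕ) : ℝ) / N) atTop (𝓝 1) := by
        have h2 : Tendsto (fun N : ℕ => 1 - (l.natAbs : ℝ) / N) atTop (𝓝 1) := by
          simpa using
            tendsto_const_nhds.sub (tendsto_const_div_atTop_nhds_zero_nat (l.natAbs : ℝ))
        apply h2.congr'
        filter_upwards [eventually_ge_atTop (l.natAbs + 1)] with N hN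
        have hN0 : (N : ℝ) ≠ 0 := Nat.cast_ne_zero.mpr (by omega)
        rw [Nat.cast_sub (by omega), sub_div, div_self hN0]
      have := h1.mul_const (r l)
      rw [one_mul] at this
      exact this
    · exact Eventually.of_forall hbd
  exact ge_of_tendsto hlim (Eventually.of_forall htsumF)
end
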